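/- Let C be a set of s vertices together with a root vertex ρ, and assign a nonnegative conductance c_e to each edge (each pair of distinct vertices of C ∪ {ρ}), such that: the sum of the conductances of edges with both endpoints in C is an integer at least s − 1; the sum of the conductances of edges from C to ρ is an integer at least s; and the total conductance over all edges is m = 2s − 1 + t for a nonnegative integer t. Then the total effective resistance to the root satisfies ∑_{x ∈ C} R_{xρ} ≥ s − 2(m − s)/3, i.e. ≥ (s+2)/3 − 2t/3, and equality is possible only when m = 2s − 1 (i.e. t = 0). -/

import Mathlib

open scoped ENNReal

set_option linter.unusedSectionVars false

attribute [local instance 10] Classical.propDecidable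

/-- A multigraph (parallel edges allowed): a finite edge type with two endpoint maps. -/
structure Multigraph (V : Type) where
  E : Type
  [fE : Fintype E]
  fst : E → V
  snd : E → V

attribute [instance] Multigraph.fE

namespace Multigraph

variable {V : Type} [Fintype V] [DecidableEq V]

/-- The number of edges of a multigraph. -/
noncomputable def edgeCount (G : Multigraph V) : ℕ := Fintype.card G.E

/-- The net current flowing out of `v` under the current assignment `f`
(the current `f e` flows from `G.fst e` to `G.snd e`). -/
noncomputable def netFlow (G : Multigraph V) (f : G.E → ℝ) (v : V) : ℝ :=
  ∑ e : G.E, ((if G.fst e = v then f e else 0) - (if G.snd e = v then f e else 0))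

/-- A unit flow from `x` to `y`: Kirchhoff's current law holds at every vertex other
than `x` and `y`, and the net current out of `x` is `1`. -/
def IsUnitFlow (G : Multigraph V) (x y : V) (f : G.E → ℝ) : Prop :=
  G.netFlow f x = 1 ∧ ∀ v : V, v ≠ x → v ≠ y → G.netFlow f v = 0

/-- The effective resistance between `x` and `y`: the least energy `∑ e, (I e)^2` of a
unit flow from `x` to `y` (`∞` if there is no such flow, `0` if `x = y`). -/
noncomputable def effRes (G : Multigraph V) (x y : V) : ℝ≥0∞ :=
  if x = y then 0
  else ⨅ f : {f : G.E → ℝ // G.IsUnitFlow x y f}, ENNReal.ofReal (∑ e : G.E, (f.1 e) ^ 2)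

/-- Adjacency in a multigraph. -/
def Adj (G : Multigraph V) (u v : V) : Prop :=
  ∃ e : G.E, (G.fst e = u ∧ G.snd e = v) ∨ (G.fst e = v ∧ G.snd e = u)

/-- A multigraph is connected if every vertex is reachable from every other. -/
def Connected (G : Multigraph V) : Prop :=
  ∀ u v : V, Relation.ReflTransGen G.Adj u v

/-- The degree of a vertex (loops count twice). -/
noncomputable def degree (G : Multigraph V) (v : V) : ℕ :=
  (Finset.univ.filter fun e : G.E => G.fst e = v).card +
    (Finset.univ.filter fun e : G.E => G.snd e = v).card

/-- The number of leaves (vertices of degree 1). -/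
noncomputable def leafCount (G : Multigraph V) : ℕ :=
  (Finset.univ.filter fun v : V => G.degree v = 1).card

/-- `A(G)`: the average effective resistance over unordered pairs of distinct vertices. -/
noncomputable def avgPairRes (G : Multigraph V) : ℝ≥0∞ :=
  (∑ x : V, ∑ y : V, G.effRes x y) / (2 * ((Fintype.card V).choose 2 : ℝ≥0∞))

/-- `A'(G)`: the average effective resistance over ordered pairs of vertices. -/
noncomputable def avgOrdRes (G : Multigraph V) : ℝ≥0∞ :=
  (∑ x : V, ∑ y : V, G.effRes x y) / ((Fintype.card V : ℝ≥0∞) ^ 2)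

/-- The total effective resistance to the root `ρ`. -/
noncomputable def Rtot (G : Multigraph V) (ρ : V) : ℝ≥0∞ := ∑ x : V, G.effRes ρ x

/-- `B(G)`: the average resistance of a non-root vertex to the root `ρ`. -/
noncomputable def rootedAvg (G : Multigraph V) (ρ : V) : ℝ≥0∞ :=
  G.Rtot ρ / ((Fintype.card V - 1 : ℕ) : ℝ≥0∞)

/-- A tree: a connected multigraph with one more vertex than edge. -/
def IsTree (G : Multigraph V) : Prop := G.Connected ∧ G.edgeCount + 1 = Fintype.card V

/-- `v` is within distance `ℓ` of `x` (there is a lazy walk of length `ℓ` from `x` to `v`). -/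
def WithinDist (G : Multigraph V) (ℓ : ℕ) (x v : V) : Prop :=
  ∃ p : ℕ → V, p 0 = x ∧ p ℓ = v ∧ ∀ i, i < ℓ → p i = p (i + 1) ∨ G.Adj (p i) (p (i + 1))

end Multigraph

open Multigraph

/-- `b_n(α)`: the least value of `B(G)` over rooted graphs with `n` non-root vertices
and at most `αn/2` edges (the root may be any vertex). -/
noncomputable def bFun (n : ℕ) (α : ℝ) : ℝ≥0∞ :=
  ⨅ G : {p : Multigraph (Fin (n + 1)) × Fin (n + 1) // (p.1.edgeCount : ℝ) ≤ α * n / 2},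
    rootedAvg G.1.1 G.1.2

/-- `a_n(α)`: the least value of `A'(G)` over graphs with `n` vertices and at most
`αn/2` edges. -/
noncomputable def aFun (n : ℕ) (α : ℝ) : ℝ≥0∞ :=
  ⨅ G : {G : Multigraph (Fin n) // (G.edgeCount : ℝ) ≤ α * n / 2}, avgOrdRes G.1

/-- `G_S`: add a new root vertex `Fin.last n` joined by one edge to each entry of the
`s`-tuple (multiset) `S`. -/
noncomputable def addRoot {n : ℕ} (G : Multigraph (Fin n)) {s : ℕ} (S : Fin s → Fin n) :
    Multigraph (Fin (n + 1)) where
  E := G.E ⊕ Fin s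
  fst := Sum.elim (fun e => (G.fst e).castSucc) fun _ => Fin.last n
  snd := Sum.elim (fun e => (G.snd e).castSucc) fun i => (S i).castSucc

section Trees

variable {V : Type} [Fintype V] [DecidableEq V]

/-- The map identifying all leaves of `T` to the single new vertex `Sum.inr ()`. -/
noncomputable def leafId (T : Multigraph V) (v : V) : V ⊕ Unit :=
  if T.degree v = 1 then Sum.inr () else Sum.inl v

/-- The multigraph obtained from `T` by identifying all its leaves to one vertex. -/
noncomputable def identifyLeaves (T : Multigraph V) : Multigraph (V ⊕ Unit) where
  E := T.E
  fst := fun e => leafId T (T.fst e)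
  snd := fun e => leafId T (T.snd e)

/-- `R(x,T)`: the effective resistance between `x` and the vertex obtained by
identifying all the leaves of `T`. -/
noncomputable def treeRes (T : Multigraph V) (x : V) : ℝ≥0∞ :=
  (identifyLeaves T).effRes (leafId T x) (Sum.inr ())

/-- The rooted graph formed from `T` and a set `S` of sinks: add a root `Sum.inr ()`
joined to each `v ∈ S` by `degree v - 1` parallel edges. -/
noncomputable def randRooted (T : Multigraph V) (S : Finset V) : Multigraph (V ⊕ Unit) where
  E := T.E ⊕ (Σ v : {v : V // v ∈ S}, Fin (T.degree v.1 - 1))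
  fst := Sum.elim (fun e => Sum.inl (T.fst e)) fun p => Sum.inl p.1.1
  snd := Sum.elim (fun e => Sum.inl (T.snd e)) fun _ => Sum.inr ()

/-- The subgraph induced on the vertices satisfying `P`. -/
noncomputable def inducedSub (G : Multigraph V) (P : V → Prop) : Multigraph {v : V // P v} where
  E := {e : G.E // P (G.fst e) ∧ P (G.snd e)}
  fst := fun e => ⟨G.fst e.1, e.2.1⟩
  snd := fun e => ⟨G.snd e.1, e.2.2⟩

lemma withinDist_self (G : Multigraph V) (ℓ : ℕ) (x : V) : G.WithinDist ℓ x x :=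
  ⟨fun _ => x, rfl, rfl, fun _ _ => Or.inl rfl⟩

/-- `R(x, T_x)` where `T_x` is the subgraph of `G` induced by the vertices within
distance `ℓ` of `x`. -/
noncomputable def localRes (G : Multigraph V) (ℓ : ℕ) (x : V) : ℝ≥0∞ :=
  treeRes (inducedSub G (G.WithinDist ℓ x)) ⟨x, withinDist_self G ℓ x⟩

/-- cyclic successor on `Fin k` -/
def cycSucc {k : ℕ} (i : Fin k) : Fin k :=
  ⟨(i.1 + 1) % k, Nat.mod_lt _ (Nat.lt_of_le_of_lt (Nat.zero_le i.1) i.isLt)⟩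

/-- `G` contains a cycle with `k` (distinct) vertices and `k` distinct edges. -/
def HasCycleLength (G : Multigraph V) (k : ℕ) : Prop :=
  0 < k ∧ ∃ (v : Fin k → V) (e : Fin k → G.E), Function.Injective v ∧ Function.Injective e ∧
    ∀ i : Fin k, (G.fst (e i) = v i ∧ G.snd (e i) = v (cycSucc i)) ∨
      (G.fst (e i) = v (cycSucc i) ∧ G.snd (e i) = v i)

/-- `G⁺/x`: delete the two edges `e₁, e₂` at the degree-2 vertex `x`, add an edge
`y₁y₂` (contracting `y₁x`), and reuse `x` as a new leaf attached to the root `ρ`. -/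
noncomputable def contractPlus (G : Multigraph V) (x ρ : V) (e₁ e₂ : G.E) (y₁ y₂ : V) :
    Multigraph V where
  E := {e : G.E // e ≠ e₁ ∧ e ≠ e₂} ⊕ Fin 2
  fst := Sum.elim (fun e => G.fst e.1) fun i => if i = 0 then y₁ else x
  snd := Sum.elim (fun e => G.snd e.1) fun i => if i = 0 then y₂ else ρ

end Trees

/-- A Queen-Bee network: every non-root vertex is joined to the root. -/
def QueenBee {n : ℕ} (G : Multigraph (Fin (n + 1))) (ρ : Fin (n + 1)) : Prop :=
  ∀ v : Fin (n + 1), v ≠ ρ → G.Adj ρ v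

section Weighted

variable {V : Type} [Fintype V] [DecidableEq V]

/-- A unit flow from `x` to `y` in a weighted network with conductances `c`:
antisymmetric, zero on edges of zero conductance, and satisfying Kirchhoff's
current law away from `x` and `y`, with net current `1` out of `x`. -/
def IsWUnitFlow (c : V → V → ℝ) (x y : V) (f : V → V → ℝ) : Prop :=
  (∀ u v, f u v = - f v u) ∧ (∀ u v, c u v = 0 → f u v = 0) ∧
    (∑ v : V, f x v) = 1 ∧ ∀ u : V, u ≠ x → u ≠ y → (∑ v : V, f u v) = 0

/-- The effective resistance between `x` and `y` in the weighted network with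
conductances `c`: the least energy `∑_{uv} I_{uv}²/c_{uv}` of a unit flow. -/
noncomputable def weffRes (c : V → V → ℝ) (x y : V) : ℝ≥0∞ :=
  if x = y then 0
  else ⨅ f : {f : V → V → ℝ // IsWUnitFlow c x y f},
    ENNReal.ofReal ((1 / 2) * ∑ u : V, ∑ v : V, (f.1 u v) ^ 2 / c u v)

end Weighted


section ResistanceHelpers

open Finset

/-- Cauchy–Schwarz with possibly-zero weights. -/
lemma my_cs {ι : Type*} (S : Finset ι) (w g : ι → ℝ) (hw : ∀ i ∈ S, 0 ≤ w i)
    (h0 : ∀ i ∈ S, w i = 0 → g i = 0) :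
    (∑ i ∈ S, g i) ^ 2 / (∑ i ∈ S, w i) ≤ ∑ i ∈ S, g i ^ 2 / w i := by
  classical
  set S' := S.filter (fun i => 0 < w i) with hS'
  have hsub : S' ⊆ S := filter_subset _ _
  have h1 : ∑ i ∈ S', g i = ∑ i ∈ S, g i := by
    refine Finset.sum_subset hsub fun i hi hni => ?_
    refine h0 i hi ?_
    by_contra hne
    exact hni (mem_filter.2 ⟨hi, lt_of_le_of_ne (hw i hi) (Ne.symm hne)⟩)
  have h2 : ∑ i ∈ S', g i ^ 2 / w i = ∑ i ∈ S, g i ^ 2 / w i := by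
    refine Finset.sum_subset hsub fun i hi hni => ?_
    have hwi : w i = 0 := by
      by_contra hne
      exact hni (mem_filter.2 ⟨hi, lt_of_le_of_ne (hw i hi) (Ne.symm hne)⟩)
    simp [hwi]
  rw [← h1, ← h2]
  rcases eq_or_lt_of_le (Finset.sum_nonneg (fun i hi => (mem_filter.1 hi).2.le : ∀ i ∈ S', 0 ≤ w i))
    with h | h
  · have : S' = ∅ := by
      by_contra hne
      obtain ⟨i, hi⟩ := Finset.nonempty_iff_ne_empty.2 hne
      have := Finset.sum_lt_sum_of_nonempty ⟨i, hi⟩ (fun j hj => (mem_filter.1 hj).2)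
      simp at this
      exact absurd h.symm (ne_of_gt (by simpa using this))
    simp [this]
  · calc (∑ i ∈ S', g i) ^ 2 / (∑ i ∈ S, w i)
        ≤ (∑ i ∈ S', g i) ^ 2 / (∑ i ∈ S', w i) := by
          apply div_le_div_of_nonneg_left (sq_nonneg _) h
          exact Finset.sum_le_sum_of_subset_of_nonneg hsub fun i hi _ => hw i hi
      _ ≤ ∑ i ∈ S', g i ^ 2 / w i :=
          Finset.sq_sum_div_le_sum_sq_div _ _ fun i hi => (mem_filter.1 hi).2

lemma my_cs_zero {ι : Type*} (S : Finset ι) (w g : ι → ℝ) (hw : ∀ i ∈ S, 0 ≤ w i)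
    (h0 : ∀ i ∈ S, w i = 0 → g i = 0) (hz : ∑ i ∈ S, w i = 0) : ∑ i ∈ S, g i = 0 := by
  refine Finset.sum_eq_zero fun i hi => h0 i hi ?_
  have := (Finset.sum_eq_zero_iff_of_nonneg hw).1 hz
  exact this i hi

lemma my_cs' {ι : Type*} (S : Finset ι) (w g : ι → ℝ) (hw : ∀ i ∈ S, 0 ≤ w i)
    (h0 : ∀ i ∈ S, w i = 0 → g i = 0) (ψ : ℝ) (hψ : ∑ i ∈ S, g i = ψ) :
    ψ ^ 2 / (∑ i ∈ S, w i) ≤ ∑ i ∈ S, g i ^ 2 / w i := by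
  rw [← hψ]; exact my_cs S w g hw h0

lemma two_term_cs (p q x y : ℝ) (hp : 0 < p) (hq : 0 < q) :
    (x + y) ^ 2 / (p + q) ≤ x ^ 2 / p + y ^ 2 / q := by
  rw [div_add_div _ _ (ne_of_gt hp) (ne_of_gt hq), div_le_div_iff₀ (by positivity) (by positivity)]
  nlinarith [sq_nonneg (x * q - y * p), sq_nonneg (x + y), mul_pos hp hq]

lemma tangent_inv (D X : ℝ) (hD : 0 < D) (hX : 0 < X) : 2 / D - X / D ^ 2 ≤ 1 / X := by
  rw [div_sub_div _ _ (ne_of_gt hD) (by positivity), div_le_div_iff₀ (by positivity) hX]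
  nlinarith [sq_nonneg (X - D), sq_nonneg D, mul_pos hD hX]

lemma harm_lin (σ b c : ℝ) (hσ : 2 ≤ σ) (hb : 0 < b) (hc : 0 < c) :
    (σ + 2) ^ 2 / (σ ^ 2 * b + 4 * c) ≤ 1 / b + 1 / c := by
  rw [div_add_div _ _ (ne_of_gt hb) (ne_of_gt hc),
    div_le_div_iff₀ (by positivity) (by positivity)]
  nlinarith [sq_nonneg (σ * b - 2 * c), mul_pos hb hc, sq_nonneg σ]

/-- The key tangent-plane inequality. -/
lemma key_ineq (σ a b c φ ψ : ℝ) (hσ : 2 ≤ σ) (ha : 0 ≤ a) (hb : 0 ≤ b) (hc : 0 ≤ c)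
    (hφψ : φ + ψ = 1) (ha0 : a = 0 → φ = 0) (hb0 : b = 0 → ψ = 0) (hc0 : c = 0 → ψ = 0) :
    2 * (σ + 2) / (3 * σ) - (σ + 2) ^ 2 * a / (9 * σ ^ 2) - b / 9 - 4 * c / (9 * σ ^ 2) ≤
      φ ^ 2 / a + ψ ^ 2 / b + ψ ^ 2 / c := by
  have hσ0 : (0:ℝ) < σ := by linarith
  have hD : (0:ℝ) < 3 * σ / (σ + 2) := by positivity
  by_cases hbc : b = 0 ∨ c = 0
  · have hψ : ψ = 0 := by rcases hbc with h | h; exacts [hb0 h, hc0 h]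
    have hφ : φ = 1 := by linarith
    have ha' : 0 < a := by
      rcases eq_or_lt_of_le ha with h | h
      · exact absurd (ha0 h.symm) (by rw [hφ]; norm_num)
      · exact h
    have h1 : 2 * (σ + 2) / (3 * σ) - (σ + 2) ^ 2 * a / (9 * σ ^ 2) ≤ 1 / a := by
      rw [div_sub_div _ _ (by positivity) (by positivity),
        div_le_div_iff₀ (by positivity) ha']
      nlinarith [sq_nonneg (3 * σ - (σ + 2) * a), sq_nonneg σ, mul_pos hσ0 ha']
    have hb9 : 0 ≤ b / 9 := by positivity
    have hc9 : 0 ≤ 4 * c / (9 * σ ^ 2) := by positivity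
    have : φ ^ 2 / a = 1 / a := by rw [hφ]; ring_nf
    rw [hψ, this]
    simp only [ne_eq, OfNat.ofNat_ne_zero, not_false_eq_true, zero_pow, zero_div]
    linarith
  · push_neg at hbc
    have hb' : 0 < b := lt_of_le_of_ne hb (Ne.symm hbc.1)
    have hc' : 0 < c := lt_of_le_of_ne hc (Ne.symm hbc.2)
    have hstep1 : ψ ^ 2 / b + ψ ^ 2 / c = ψ ^ 2 * (1 / b + 1 / c) := by ring
    have hstep2 : ψ ^ 2 * ((σ + 2) ^ 2 / (σ ^ 2 * b + 4 * c)) ≤ ψ ^ 2 * (1 / b + 1 / c) :=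
      mul_le_mul_of_nonneg_left (harm_lin σ b c hσ hb' hc') (sq_nonneg ψ)
    have hXd : (0:ℝ) < (σ ^ 2 * b + 4 * c) / (σ + 2) ^ 2 := by positivity
    have hstep2' : ψ ^ 2 * ((σ + 2) ^ 2 / (σ ^ 2 * b + 4 * c)) =
        ψ ^ 2 / ((σ ^ 2 * b + 4 * c) / (σ + 2) ^ 2) := by
      rw [div_div_eq_mul_div, div_eq_mul_inv, div_eq_mul_inv]
      ring_nf
    rcases eq_or_lt_of_le ha with haz | ha'
    · have hφ : φ = 0 := ha0 haz.symm
      have hψ : ψ = 1 := by linarith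
      have hchain : 2 / (3 * σ / (σ + 2)) - ((σ ^ 2 * b + 4 * c) / (σ + 2) ^ 2) /
          (3 * σ / (σ + 2)) ^ 2 ≤ ψ ^ 2 / b + ψ ^ 2 / c := by
        refine le_trans (tangent_inv _ _ hD hXd) ?_
        rw [hstep1, hψ]
        have := harm_lin σ b c hσ hb' hc'
        calc 1 / ((σ ^ 2 * b + 4 * c) / (σ + 2) ^ 2)
            = (σ + 2) ^ 2 / (σ ^ 2 * b + 4 * c) := by
              rw [one_div, inv_div]
          _ ≤ 1 / b + 1 / c := this
          _ = 1 ^ 2 * (1 / b + 1 / c) := by ring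
      have hid : 2 / (3 * σ / (σ + 2)) - ((σ ^ 2 * b + 4 * c) / (σ + 2) ^ 2) /
          (3 * σ / (σ + 2)) ^ 2 =
          2 * (σ + 2) / (3 * σ) - b / 9 - 4 * c / (9 * σ ^ 2) := by
        field_simp
        ring
      rw [← haz] at *
      rw [hφ]
      simp only [ne_eq, OfNat.ofNat_ne_zero, not_false_eq_true, zero_pow, zero_div, zero_add]
      calc 2 * (σ + 2) / (3 * σ) - (σ + 2) ^ 2 * 0 / (9 * σ ^ 2) - b / 9 - 4 * c / (9 * σ ^ 2)
          = 2 * (σ + 2) / (3 * σ) - b / 9 - 4 * c / (9 * σ ^ 2) := by ring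
        _ ≤ ψ ^ 2 / b + ψ ^ 2 / c := by rw [← hid]; exact hchain
    · have hX : (0:ℝ) < a + (σ ^ 2 * b + 4 * c) / (σ + 2) ^ 2 := by positivity
      have hcs : (φ + ψ) ^ 2 / (a + (σ ^ 2 * b + 4 * c) / (σ + 2) ^ 2) ≤
          φ ^ 2 / a + ψ ^ 2 / ((σ ^ 2 * b + 4 * c) / (σ + 2) ^ 2) :=
        two_term_cs _ _ _ _ ha' hXd
      rw [hφψ] at hcs
      have hfinal : 2 / (3 * σ / (σ + 2)) -
          (a + (σ ^ 2 * b + 4 * c) / (σ + 2) ^ 2) / (3 * σ / (σ + 2)) ^ 2 ≤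
          φ ^ 2 / a + ψ ^ 2 / b + ψ ^ 2 / c := by
        calc 2 / (3 * σ / (σ + 2)) -
            (a + (σ ^ 2 * b + 4 * c) / (σ + 2) ^ 2) / (3 * σ / (σ + 2)) ^ 2
            ≤ 1 / (a + (σ ^ 2 * b + 4 * c) / (σ + 2) ^ 2) := tangent_inv _ _ hD hX
          _ = 1 ^ 2 / (a + (σ ^ 2 * b + 4 * c) / (σ + 2) ^ 2) := by norm_num
          _ ≤ φ ^ 2 / a + ψ ^ 2 / ((σ ^ 2 * b + 4 * c) / (σ + 2) ^ 2) := hcs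
          _ = φ ^ 2 / a + ψ ^ 2 * ((σ + 2) ^ 2 / (σ ^ 2 * b + 4 * c)) := by rw [hstep2']
          _ ≤ φ ^ 2 / a + ψ ^ 2 * (1 / b + 1 / c) := by linarith [hstep2]
          _ = φ ^ 2 / a + ψ ^ 2 / b + ψ ^ 2 / c := by rw [← hstep1]; ring
      refine le_trans (le_of_eq ?_) hfinal
      field_simp
      ring

lemma pos_real (a b φ : ℝ) (ha : 0 ≤ a) (hb : 0 ≤ b) (h1 : a = 0 → φ = 0)
    (h2 : b = 0 → 1 - φ = 0) :
    1 / (2 * (a + b + 1)) ≤ φ ^ 2 / a + (1 - φ) ^ 2 / b := by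
  rcases eq_or_lt_of_le ha with ha0 | ha0
  · have hφ : φ = 0 := h1 ha0.symm
    have hb0 : 0 < b := by
      rcases eq_or_lt_of_le hb with h | h
      · exact absurd (h2 h.symm) (by rw [hφ]; norm_num)
      · exact h
    rw [← ha0, hφ]
    have hgoal : 1 / (2 * (0 + b + 1)) ≤ 1 / b :=
      one_div_le_one_div_of_le hb0 (by linarith)
    calc 1 / (2 * (0 + b + 1)) ≤ 1 / b := hgoal
      _ = (0:ℝ) ^ 2 / 0 + (1 - 0) ^ 2 / b := by norm_num
  · rcases eq_or_lt_of_le hb with hb0 | hb0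
    · have hψ : 1 - φ = 0 := h2 hb0.symm
      have hφ : φ = 1 := by linarith
      rw [← hb0, hφ]
      have hgoal : 1 / (2 * (a + 0 + 1)) ≤ 1 / a :=
        one_div_le_one_div_of_le ha0 (by linarith)
      calc 1 / (2 * (a + 0 + 1)) ≤ 1 / a := hgoal
        _ = (1:ℝ) ^ 2 / a + (1 - 1) ^ 2 / 0 := by norm_num
    · have h3 : (φ + (1 - φ)) ^ 2 / (a + b) ≤ φ ^ 2 / a + (1 - φ) ^ 2 / b :=
        two_term_cs a b φ (1 - φ) ha0 hb0
      have h6 : (φ + (1 - φ)) ^ 2 / (a + b) = 1 / (a + b) := by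
        rw [show φ + (1 - φ) = (1:ℝ) by ring, one_pow]
      have h4 : 1 / (2 * (a + b + 1)) ≤ 1 / (a + b) :=
        one_div_le_one_div_of_le (by linarith) (by linarith)
      linarith

lemma ofReal_sum_le' {ι : Type*} (S : Finset ι) (g : ι → ℝ) :
    ENNReal.ofReal (∑ i ∈ S, g i) ≤ ∑ i ∈ S, ENNReal.ofReal (g i) := by
  classical
  induction S using Finset.induction_on with
  | empty => simp
  | insert _ _ h ih =>
      rw [Finset.sum_insert h, Finset.sum_insert h]
      exact le_trans ENNReal.ofReal_add_le (add_le_add le_rfl ih)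

end ResistanceHelpers

open Finset in
lemma energy_bound {s : ℕ} (c f : (Fin s ⊕ Unit) → (Fin s ⊕ Unit) → ℝ)
    (hsymm : ∀ u v, c u v = c v u) (hnonneg : ∀ u v, 0 ≤ c u v) (x : Fin s)
    (hf : IsWUnitFlow c (Sum.inl x) (Sum.inr ()) f) :
    (c (Sum.inl x) (Sum.inr ()) = 0 → f (Sum.inl x) (Sum.inr ()) = 0) ∧
    ((∑ y ∈ Finset.univ.erase x, c (Sum.inl x) (Sum.inl y)) = 0 →
      1 - f (Sum.inl x) (Sum.inr ()) = 0) ∧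
    ((∑ y ∈ Finset.univ.erase x, c (Sum.inl y) (Sum.inr ())) = 0 →
      1 - f (Sum.inl x) (Sum.inr ()) = 0) ∧
    f (Sum.inl x) (Sum.inr ()) ^ 2 / c (Sum.inl x) (Sum.inr ())
      + (1 - f (Sum.inl x) (Sum.inr ())) ^ 2 /
          (∑ y ∈ Finset.univ.erase x, c (Sum.inl x) (Sum.inl y))
      + (1 - f (Sum.inl x) (Sum.inr ())) ^ 2 /
          (∑ y ∈ Finset.univ.erase x, c (Sum.inl y) (Sum.inr ()))
      ≤ (1/2) * ∑ u, ∑ v, (f u v) ^ 2 / c u v := by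
  classical
  obtain ⟨hanti, hzero, hx, hkir⟩ := hf
  have hdiag : ∀ u, f u u = 0 := fun u => by have := hanti u u; linarith
  -- (ii) internal outflow
  have hψb : ∑ y ∈ Finset.univ.erase x, f (Sum.inl x) (Sum.inl y)
      = 1 - f (Sum.inl x) (Sum.inr ()) := by
    have hx' := hx
    rw [Fintype.sum_sum_type] at hx'
    simp only [Finset.univ_unique, Finset.sum_singleton] at hx'
    have hsplit : ∑ y : Fin s, f (Sum.inl x) (Sum.inl y) =
        f (Sum.inl x) (Sum.inl x) + ∑ y ∈ Finset.univ.erase x, f (Sum.inl x) (Sum.inl y) :=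
      (Finset.add_sum_erase _ _ (mem_univ x)).symm
    rw [hsplit, hdiag (Sum.inl x)] at hx'
    have hu : (default : Unit) = () := rfl
    rw [hu] at hx'
    linarith
  -- net inflow at the root is 1
  have htot0 : ∑ u : Fin s ⊕ Unit, ∑ v : Fin s ⊕ Unit, f u v = 0 := by
    have h1 : ∑ u : Fin s ⊕ Unit, ∑ v : Fin s ⊕ Unit, f u v
        = - ∑ u : Fin s ⊕ Unit, ∑ v : Fin s ⊕ Unit, f u v := by
      calc ∑ u : Fin s ⊕ Unit, ∑ v : Fin s ⊕ Unit, f u v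
          = ∑ u : Fin s ⊕ Unit, ∑ v : Fin s ⊕ Unit, -(f v u) :=
            Finset.sum_congr rfl fun u _ => Finset.sum_congr rfl fun v _ => hanti u v
        _ = - ∑ u : Fin s ⊕ Unit, ∑ v : Fin s ⊕ Unit, f v u := by
            simp only [Finset.sum_neg_distrib]
        _ = - ∑ v : Fin s ⊕ Unit, ∑ u : Fin s ⊕ Unit, f v u := by rw [Finset.sum_comm]
    linarith
  have hrowρ : ∑ v : Fin s ⊕ Unit, f (Sum.inr ()) v = -1 := by
    have hdec := htot0
    rw [Fintype.sum_sum_type] at hdec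
    simp only [Finset.univ_unique, Finset.sum_singleton] at hdec
    have hsplit : ∑ y : Fin s, ∑ v : Fin s ⊕ Unit, f (Sum.inl y) v =
        (∑ v : Fin s ⊕ Unit, f (Sum.inl x) v)
          + ∑ y ∈ Finset.univ.erase x, ∑ v : Fin s ⊕ Unit, f (Sum.inl y) v :=
      (Finset.add_sum_erase _ _ (mem_univ x)).symm
    have hz : ∑ y ∈ Finset.univ.erase x, ∑ v : Fin s ⊕ Unit, f (Sum.inl y) v = 0 := by
      refine Finset.sum_eq_zero fun y hy => ?_
      refine hkir (Sum.inl y) ?_ ?_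
      · simp only [ne_eq, Sum.inl.injEq]
        exact (Finset.mem_erase.1 hy).1
      · simp
    rw [hsplit, hx, hz] at hdec
    have hu : (default : Unit) = () := rfl
    rw [hu] at hdec
    linarith
  have hψc : ∑ y ∈ Finset.univ.erase x, f (Sum.inl y) (Sum.inr ())
      = 1 - f (Sum.inl x) (Sum.inr ()) := by
    have hin : ∑ v : Fin s ⊕ Unit, f v (Sum.inr ()) = 1 := by
      have : ∑ v : Fin s ⊕ Unit, f v (Sum.inr ())
          = - ∑ v : Fin s ⊕ Unit, f (Sum.inr ()) v := by
        rw [← Finset.sum_neg_distrib]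
        exact Finset.sum_congr rfl fun v _ => hanti v (Sum.inr ())
      rw [this, hrowρ]; norm_num
    rw [Fintype.sum_sum_type] at hin
    simp only [Finset.univ_unique, Finset.sum_singleton] at hin
    have hsplit : ∑ y : Fin s, f (Sum.inl y) (Sum.inr ()) =
        f (Sum.inl x) (Sum.inr ()) +
          ∑ y ∈ Finset.univ.erase x, f (Sum.inl y) (Sum.inr ()) :=
      (Finset.add_sum_erase _ _ (mem_univ x)).symm
    have hu : (default : Unit) = () := rfl
    rw [hu, hdiag (Sum.inr ())] at hin
    rw [hsplit] at hin
    linarith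
  -- the energy terms
  set T : (Fin s ⊕ Unit) → (Fin s ⊕ Unit) → ℝ := fun u v => f u v ^ 2 / c u v with hT
  have hTnn : ∀ u v, 0 ≤ T u v := by
    intro u v
    by_cases h : c u v = 0
    · simp [hT, hzero u v h, h]
    · exact div_nonneg (sq_nonneg _) (hnonneg u v)
  have hTsymm : ∀ u v, T u v = T v u := by
    intro u v
    simp only [hT]
    rw [hanti u v, hsymm u v, neg_pow]
    norm_num
  -- row decomposition
  have hrowX : ∑ v : Fin s ⊕ Unit, T (Sum.inl x) v
      = (∑ y ∈ Finset.univ.erase x, T (Sum.inl x) (Sum.inl y)) + T (Sum.inl x) (Sum.inr ()) := by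
    rw [Fintype.sum_sum_type]
    simp only [Finset.univ_unique, Finset.sum_singleton]
    have hsplit : ∑ y : Fin s, T (Sum.inl x) (Sum.inl y) =
        T (Sum.inl x) (Sum.inl x) + ∑ y ∈ Finset.univ.erase x, T (Sum.inl x) (Sum.inl y) :=
      (Finset.add_sum_erase _ _ (mem_univ x)).symm
    have hTxx : T (Sum.inl x) (Sum.inl x) = 0 := by simp [hT, hdiag]
    rw [hsplit, hTxx, zero_add]
  have hrowY : ∀ y ∈ Finset.univ.erase x,
      T (Sum.inl y) (Sum.inl x) + T (Sum.inl y) (Sum.inr ())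
        ≤ ∑ v : Fin s ⊕ Unit, T (Sum.inl y) v := by
    intro y _
    rw [Fintype.sum_sum_type]
    simp only [Finset.univ_unique, Finset.sum_singleton]
    have h1 : T (Sum.inl y) (Sum.inl x) ≤ ∑ z : Fin s, T (Sum.inl y) (Sum.inl z) :=
      Finset.single_le_sum (fun z _ => hTnn _ _) (mem_univ x)
    have : T (Sum.inl y) (Sum.inr default) = T (Sum.inl y) (Sum.inr ()) := rfl
    linarith
  have hrowρT : T (Sum.inl x) (Sum.inr ()) +
      (∑ y ∈ Finset.univ.erase x, T (Sum.inl y) (Sum.inr ()))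
        ≤ ∑ v : Fin s ⊕ Unit, T (Sum.inr ()) v := by
    rw [Fintype.sum_sum_type]
    simp only [Finset.univ_unique, Finset.sum_singleton]
    have hsplit : ∑ z : Fin s, T (Sum.inr ()) (Sum.inl z) =
        T (Sum.inr ()) (Sum.inl x) + ∑ y ∈ Finset.univ.erase x, T (Sum.inr ()) (Sum.inl y) :=
      (Finset.add_sum_erase _ _ (mem_univ x)).symm
    have h1 : T (Sum.inr ()) (Sum.inl x) = T (Sum.inl x) (Sum.inr ()) := hTsymm _ _
    have h2 : ∑ y ∈ Finset.univ.erase x, T (Sum.inr ()) (Sum.inl y)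
        = ∑ y ∈ Finset.univ.erase x, T (Sum.inl y) (Sum.inr ()) :=
      Finset.sum_congr rfl fun y _ => hTsymm _ _
    have h3 : 0 ≤ T (Sum.inr ()) (Sum.inr default) := hTnn _ _
    rw [hsplit, h1, h2]
    linarith
  have hE2 : 2 * ((∑ y ∈ Finset.univ.erase x, T (Sum.inl x) (Sum.inl y))
      + T (Sum.inl x) (Sum.inr ())
      + (∑ y ∈ Finset.univ.erase x, T (Sum.inl y) (Sum.inr ())))
      ≤ ∑ u : Fin s ⊕ Unit, ∑ v : Fin s ⊕ Unit, T u v := by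
    rw [Fintype.sum_sum_type]
    simp only [Finset.univ_unique, Finset.sum_singleton]
    have hsplit : ∑ y : Fin s, ∑ v : Fin s ⊕ Unit, T (Sum.inl y) v =
        (∑ v : Fin s ⊕ Unit, T (Sum.inl x) v)
          + ∑ y ∈ Finset.univ.erase x, ∑ v : Fin s ⊕ Unit, T (Sum.inl y) v :=
      (Finset.add_sum_erase _ _ (mem_univ x)).symm
    have hmid : ∑ y ∈ Finset.univ.erase x,
        (T (Sum.inl y) (Sum.inl x) + T (Sum.inl y) (Sum.inr ()))
        ≤ ∑ y ∈ Finset.univ.erase x, ∑ v : Fin s ⊕ Unit, T (Sum.inl y) v :=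
      Finset.sum_le_sum hrowY
    have hmid' : ∑ y ∈ Finset.univ.erase x,
        (T (Sum.inl y) (Sum.inl x) + T (Sum.inl y) (Sum.inr ()))
        = (∑ y ∈ Finset.univ.erase x, T (Sum.inl x) (Sum.inl y))
          + ∑ y ∈ Finset.univ.erase x, T (Sum.inl y) (Sum.inr ()) := by
      rw [Finset.sum_add_distrib]
      congr 1
      exact Finset.sum_congr rfl fun y _ => hTsymm _ _
    have hlast : T (Sum.inl x) (Sum.inr ()) +
        (∑ y ∈ Finset.univ.erase x, T (Sum.inl y) (Sum.inr ()))
          ≤ ∑ v : Fin s ⊕ Unit, T (Sum.inr default) v := hrowρT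
    have hmid2 := hmid
    rw [hmid'] at hmid2
    rw [hsplit, hrowX]
    linarith [hlast]
  -- Cauchy on the two groups
  have hbterm := my_cs' (Finset.univ.erase x) (fun y => c (Sum.inl x) (Sum.inl y))
    (fun y => f (Sum.inl x) (Sum.inl y)) (fun y _ => hnonneg _ _)
    (fun y _ h => hzero _ _ h) _ hψb
  have hccterm := my_cs' (Finset.univ.erase x) (fun y => c (Sum.inl y) (Sum.inr ()))
    (fun y => f (Sum.inl y) (Sum.inr ())) (fun y _ => hnonneg _ _)
    (fun y _ h => hzero _ _ h) _ hψc
  have hE2' := hE2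
  simp only [hT] at hE2'
  refine ⟨fun h => hzero _ _ h, ?_, ?_, ?_⟩
  · intro h
    have := my_cs_zero (Finset.univ.erase x) (fun y => c (Sum.inl x) (Sum.inl y))
      (fun y => f (Sum.inl x) (Sum.inl y)) (fun y _ => hnonneg _ _)
      (fun y _ h' => hzero _ _ h') h
    rw [hψb] at this
    exact this
  · intro h
    have := my_cs_zero (Finset.univ.erase x) (fun y => c (Sum.inl y) (Sum.inr ()))
      (fun y => f (Sum.inl y) (Sum.inr ())) (fun y _ => hnonneg _ _)
      (fun y _ h' => hzero _ _ h') h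
    rw [hψc] at this
    exact this
  · linarith [hbterm, hccterm, hE2']

open Finset in
lemma weffRes_ge {s : ℕ} (c : (Fin s ⊕ Unit) → (Fin s ⊕ Unit) → ℝ)
    (hsymm : ∀ u v, c u v = c v u) (hnonneg : ∀ u v, 0 ≤ c u v) (x : Fin s) (g : ℝ)
    (hkey : ∀ φ : ℝ, (c (Sum.inl x) (Sum.inr ()) = 0 → φ = 0) →
      ((∑ y ∈ Finset.univ.erase x, c (Sum.inl x) (Sum.inl y)) = 0 → 1 - φ = 0) →
      ((∑ y ∈ Finset.univ.erase x, c (Sum.inl y) (Sum.inr ())) = 0 → 1 - φ = 0) →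
      g ≤ φ ^ 2 / c (Sum.inl x) (Sum.inr ())
        + (1 - φ) ^ 2 / (∑ y ∈ Finset.univ.erase x, c (Sum.inl x) (Sum.inl y))
        + (1 - φ) ^ 2 / (∑ y ∈ Finset.univ.erase x, c (Sum.inl y) (Sum.inr ()))) :
    ENNReal.ofReal g ≤ weffRes c (Sum.inl x) (Sum.inr ()) := by
  rw [weffRes, if_neg (by simp)]
  refine le_iInf fun fp => ?_
  obtain ⟨f, hf⟩ := fp
  obtain ⟨h1, h2, h3, h4⟩ := energy_bound c f hsymm hnonneg x hf
  exact ENNReal.ofReal_le_ofReal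
    (le_trans (hkey (f (Sum.inl x) (Sum.inr ())) h1 h2 h3) h4)

open Finset in
/-- uniform positivity of the effective resistance to the root -/
lemma weffRes_pos {s : ℕ} (c : (Fin s ⊕ Unit) → (Fin s ⊕ Unit) → ℝ)
    (hsymm : ∀ u v, c u v = c v u) (hnonneg : ∀ u v, 0 ≤ c u v) (x : Fin s) :
    ENNReal.ofReal (1 / (2 * (c (Sum.inl x) (Sum.inr ())
      + (∑ y ∈ Finset.univ.erase x, c (Sum.inl x) (Sum.inl y)) + 1)))
      ≤ weffRes c (Sum.inl x) (Sum.inr ()) := by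
  refine weffRes_ge c hsymm hnonneg x _ fun φ h1 h2 h3 => ?_
  have hcc : 0 ≤ (1 - φ) ^ 2 / (∑ y ∈ Finset.univ.erase x, c (Sum.inl y) (Sum.inr ())) :=
    div_nonneg (sq_nonneg _) (Finset.sum_nonneg fun y _ => hnonneg _ _)
  have := pos_real (c (Sum.inl x) (Sum.inr ()))
    (∑ y ∈ Finset.univ.erase x, c (Sum.inl x) (Sum.inl y)) φ (hnonneg _ _)
    (Finset.sum_nonneg fun y _ => hnonneg _ _) h1 h2
  linarith

open Finset in
lemma conclude_res {s : ℕ} (hs : 1 ≤ s) (c : (Fin s ⊕ Unit) → (Fin s ⊕ Unit) → ℝ)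
    (hsymm : ∀ u v, c u v = c v u) (hnonneg : ∀ u v, 0 ≤ c u v) (target val : ℝ) (t : ℕ)
    (h1 : target ≤ val) (h2 : t ≠ 0 → target < val)
    (h3 : ENNReal.ofReal val ≤ ∑ x : Fin s, weffRes c (Sum.inl x) (Sum.inr ())) :
    ENNReal.ofReal target ≤ (∑ x : Fin s, weffRes c (Sum.inl x) (Sum.inr ())) ∧
      ((∑ x : Fin s, weffRes c (Sum.inl x) (Sum.inr ())) = ENNReal.ofReal target → t = 0) := by
  constructor
  · exact le_trans (ENNReal.ofReal_le_ofReal h1) h3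
  · intro heq
    by_contra htne
    have hR2' := h2 htne
    have hlt : ENNReal.ofReal target < ∑ x : Fin s, weffRes c (Sum.inl x) (Sum.inr ()) := by
      by_cases htar : target ≤ 0
      · rw [ENNReal.ofReal_of_nonpos htar]
        set x0 : Fin s := ⟨0, hs⟩
        have hA : 0 ≤ c (Sum.inl x0) (Sum.inr ()) := hnonneg _ _
        have hB : 0 ≤ ∑ y ∈ Finset.univ.erase x0, c (Sum.inl x0) (Sum.inl y) :=
          Finset.sum_nonneg fun y _ => hnonneg _ _
        have hpos : 0 < 1 / (2 * (c (Sum.inl x0) (Sum.inr ())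
            + (∑ y ∈ Finset.univ.erase x0, c (Sum.inl x0) (Sum.inl y)) + 1)) :=
          one_div_pos.2 (by linarith)
        calc (0 : ℝ≥0∞) < ENNReal.ofReal (1 / (2 * (c (Sum.inl x0) (Sum.inr ())
              + (∑ y ∈ Finset.univ.erase x0, c (Sum.inl x0) (Sum.inl y)) + 1))) :=
              ENNReal.ofReal_pos.2 hpos
          _ ≤ weffRes c (Sum.inl x0) (Sum.inr ()) := weffRes_pos c hsymm hnonneg x0
          _ ≤ ∑ x : Fin s, weffRes c (Sum.inl x) (Sum.inr ()) :=
              Finset.single_le_sum (f := fun x : Fin s => weffRes c (Sum.inl x) (Sum.inr ()))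
                (fun i _ => zero_le') (Finset.mem_univ x0)
      · push_neg at htar
        exact lt_of_lt_of_le ((ENNReal.ofReal_lt_ofReal_iff (by linarith)).2 hR2') h3
    exact ne_of_gt hlt heq

set_option maxHeartbeats 1000000 in
open Finset in
/-- **Lemma (legal Queen-Bee components).** Let `C` be a set of `s` vertices together
with a root `ρ`, with nonnegative conductances on all edges such that: the total
conductance inside `C` is an integer at least `s-1`, the total conductance from `C` to
`ρ` is an integer at least `s`, and the total conductance is `m = 2s - 1 + t` for a
nonnegative integer `t`.  Then `∑_{x ∈ C} R_{xρ} ≥ (s+2)/3 - 2t/3 (= s - 2(m-s)/3)`,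
with equality possible only when `t = 0` (i.e. `m = 2s - 1`). -/
theorem stmt17 (s : ℕ) (hs : 1 ≤ s) (t m : ℕ) (hm : m = 2 * s - 1 + t)
    (c : (Fin s ⊕ Unit) → (Fin s ⊕ Unit) → ℝ)
    (hsymm : ∀ u v, c u v = c v u) (hnonneg : ∀ u v, 0 ≤ c u v)
    (hloop : ∀ v, c v v = 0)
    (hint : ∃ k : ℕ, s - 1 ≤ k ∧
      (1 / 2) * (∑ u : Fin s, ∑ v : Fin s, c (Sum.inl u) (Sum.inl v)) = (k : ℝ))
    (hroot : ∃ j : ℕ, s ≤ j ∧ (∑ u : Fin s, c (Sum.inl u) (Sum.inr ())) = (j : ℝ))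
    (htot : (1 / 2) * (∑ u : Fin s, ∑ v : Fin s, c (Sum.inl u) (Sum.inl v)) +
      (∑ u : Fin s, c (Sum.inl u) (Sum.inr ())) = (m : ℝ)) :
    ENNReal.ofReal (((s : ℝ) + 2) / 3 - 2 * t / 3) ≤
        (∑ x : Fin s, weffRes c (Sum.inl x) (Sum.inr ())) ∧
      ((∑ x : Fin s, weffRes c (Sum.inl x) (Sum.inr ())) =
          ENNReal.ofReal (((s : ℝ) + 2) / 3 - 2 * t / 3) → t = 0) := by
  classical
  obtain ⟨k, hk1, hk2⟩ := hint
  obtain ⟨j, hj1, hj2⟩ := hroot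
  have hjk : (k : ℝ) + (j : ℝ) = (m : ℝ) := by rw [← hk2, ← hj2]; exact htot
  have h2s : 1 ≤ 2 * s := by omega
  have hmR : (m : ℝ) = 2 * (s : ℝ) - 1 + (t : ℝ) := by
    rw [hm, Nat.cast_add, Nat.cast_sub h2s]
    push_cast
    ring
  have hj1R : (s : ℝ) ≤ (j : ℝ) := by exact_mod_cast hj1
  have hk1R : (s : ℝ) - 1 ≤ (k : ℝ) := by
    have h := (Nat.cast_le (α := ℝ)).2 hk1
    rwa [Nat.cast_sub hs, Nat.cast_one] at h
  have httR : (t : ℝ) = (j : ℝ) + (k : ℝ) - (2 * (s : ℝ) - 1) := by linarith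
  by_cases hs2 : 2 ≤ s
  · -- main case s ≥ 2
    have hσ2 : (2 : ℝ) ≤ (s : ℝ) := by exact_mod_cast hs2
    have hσ0 : (0 : ℝ) < (s : ℝ) := by linarith
    set gx : Fin s → ℝ := fun x =>
      2 * ((s : ℝ) + 2) / (3 * (s : ℝ))
        - (((s : ℝ) + 2) ^ 2 / (9 * (s : ℝ) ^ 2)) * c (Sum.inl x) (Sum.inr ())
        - (1 / 9) * (∑ y ∈ Finset.univ.erase x, c (Sum.inl x) (Sum.inl y))
        - (4 / (9 * (s : ℝ) ^ 2)) * (∑ y ∈ Finset.univ.erase x, c (Sum.inl y) (Sum.inr ()))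
      with hgx
    have hper : ∀ x : Fin s,
        ENNReal.ofReal (gx x) ≤ weffRes c (Sum.inl x) (Sum.inr ()) := by
      intro x
      refine weffRes_ge c hsymm hnonneg x _ fun φ h1 h2 h3 => ?_
      have h4 : φ + (1 - φ) = 1 := by ring
      have hkey := key_ineq (s : ℝ) (c (Sum.inl x) (Sum.inr ()))
        (∑ y ∈ Finset.univ.erase x, c (Sum.inl x) (Sum.inl y))
        (∑ y ∈ Finset.univ.erase x, c (Sum.inl y) (Sum.inr ())) φ (1 - φ) hσ2
        (hnonneg _ _) (Finset.sum_nonneg fun y _ => hnonneg _ _)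
        (Finset.sum_nonneg fun y _ => hnonneg _ _) h4 h1 h2 h3
      have heqg : gx x = 2 * ((s : ℝ) + 2) / (3 * (s : ℝ))
          - ((s : ℝ) + 2) ^ 2 * c (Sum.inl x) (Sum.inr ()) / (9 * (s : ℝ) ^ 2)
          - (∑ y ∈ Finset.univ.erase x, c (Sum.inl x) (Sum.inl y)) / 9
          - 4 * (∑ y ∈ Finset.univ.erase x, c (Sum.inl y) (Sum.inr ())) / (9 * (s : ℝ) ^ 2) := by
        rw [hgx]; ring
      rw [heqg]
      exact hkey
    have hsum_b : ∑ x : Fin s, (∑ y ∈ Finset.univ.erase x, c (Sum.inl x) (Sum.inl y))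
        = 2 * (k : ℝ) := by
      have h1 : ∀ x : Fin s, ∑ y ∈ Finset.univ.erase x, c (Sum.inl x) (Sum.inl y)
          = ∑ y : Fin s, c (Sum.inl x) (Sum.inl y) := by
        intro x
        rw [Finset.sum_erase_eq_sub (Finset.mem_univ x), hloop, sub_zero]
      rw [Finset.sum_congr rfl fun x _ => h1 x]
      linarith
    have hsum_c : ∑ x : Fin s, (∑ y ∈ Finset.univ.erase x, c (Sum.inl y) (Sum.inr ()))
        = ((s : ℝ) - 1) * (j : ℝ) := by
      have h1 : ∀ x : Fin s, ∑ y ∈ Finset.univ.erase x, c (Sum.inl y) (Sum.inr ())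
          = (j : ℝ) - c (Sum.inl x) (Sum.inr ()) := by
        intro x
        rw [Finset.sum_erase_eq_sub (Finset.mem_univ x), hj2]
      rw [Finset.sum_congr rfl fun x _ => h1 x, Finset.sum_sub_distrib, Finset.sum_const,
        hj2, Finset.card_univ, Fintype.card_fin, nsmul_eq_mul]
      ring
    have hgsum : ∑ x : Fin s, gx x
        = (s : ℝ) * (2 * ((s : ℝ) + 2) / (3 * (s : ℝ)))
          - (((s : ℝ) + 2) ^ 2 / (9 * (s : ℝ) ^ 2)) * (j : ℝ)
          - (1 / 9) * (2 * (k : ℝ))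
          - (4 / (9 * (s : ℝ) ^ 2)) * (((s : ℝ) - 1) * (j : ℝ)) := by
      simp only [hgx]
      rw [Finset.sum_sub_distrib, Finset.sum_sub_distrib, Finset.sum_sub_distrib,
        ← Finset.mul_sum, ← Finset.mul_sum, ← Finset.mul_sum, Finset.sum_const,
        Finset.card_univ, Fintype.card_fin, nsmul_eq_mul, hj2, hsum_b, hsum_c]
    have hid : (∑ x : Fin s, gx x) - (((s : ℝ) + 2) / 3 - 2 * (t : ℝ) / 3)
        = (((j : ℝ) - (s : ℝ)) * (5 * (s : ℝ) - 8)
            + 4 * (s : ℝ) * ((k : ℝ) - (s : ℝ) + 1)) / (9 * (s : ℝ)) := by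
      rw [hgsum, httR]
      field_simp
      ring
    have p1 : (0 : ℝ) ≤ (j : ℝ) - (s : ℝ) := by linarith
    have p2 : (0 : ℝ) ≤ (k : ℝ) - (s : ℝ) + 1 := by linarith
    have p3 : (2 : ℝ) ≤ 5 * (s : ℝ) - 8 := by linarith
    have e1 : ((j : ℝ) - (s : ℝ)) * 2 ≤ ((j : ℝ) - (s : ℝ)) * (5 * (s : ℝ) - 8) :=
      mul_le_mul_of_nonneg_left p3 p1
    have e2 : ((k : ℝ) - (s : ℝ) + 1) * 2 ≤ ((k : ℝ) - (s : ℝ) + 1) * (4 * (s : ℝ)) :=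
      mul_le_mul_of_nonneg_left (by linarith) p2
    have hfin1 : ((s : ℝ) + 2) / 3 - 2 * (t : ℝ) / 3 ≤ ∑ x : Fin s, gx x := by
      have hnum : (0 : ℝ) ≤ ((j : ℝ) - (s : ℝ)) * (5 * (s : ℝ) - 8)
          + 4 * (s : ℝ) * ((k : ℝ) - (s : ℝ) + 1) := by linarith
      have := div_nonneg hnum (by linarith : (0 : ℝ) ≤ 9 * (s : ℝ))
      linarith
    have hfin2 : t ≠ 0 → ((s : ℝ) + 2) / 3 - 2 * (t : ℝ) / 3 < ∑ x : Fin s, gx x := by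
      intro htne
      have ht1 : (1 : ℝ) ≤ (t : ℝ) := by
        exact_mod_cast Nat.one_le_iff_ne_zero.2 htne
      have hnum : (0 : ℝ) < ((j : ℝ) - (s : ℝ)) * (5 * (s : ℝ) - 8)
          + 4 * (s : ℝ) * ((k : ℝ) - (s : ℝ) + 1) := by linarith
      have := div_pos hnum (by linarith : (0 : ℝ) < 9 * (s : ℝ))
      linarith
    have h3chain : ENNReal.ofReal (∑ x : Fin s, gx x)
        ≤ ∑ x : Fin s, weffRes c (Sum.inl x) (Sum.inr ()) :=
      le_trans (ofReal_sum_le' _ _) (Finset.sum_le_sum fun x _ => hper x)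
    exact conclude_res hs c hsymm hnonneg _ _ t hfin1 hfin2 h3chain
  · -- case s = 1
    have hs1 : s = 1 := by omega
    subst hs1
    have hc00 : c (Sum.inl 0) (Sum.inl 0) = 0 := hloop _
    rw [Fin.sum_univ_one, Fin.sum_univ_one] at hk2
    rw [Fin.sum_univ_one] at hj2
    rw [hc00] at hk2
    have hk0 : (k : ℝ) = 0 := by linarith
    have haM : c (Sum.inl 0) (Sum.inr ()) = (m : ℝ) := by linarith
    have hm1 : (m : ℝ) = 1 + (t : ℝ) := by
      rw [hmR]; norm_num
    have htnn : (0 : ℝ) ≤ (t : ℝ) := Nat.cast_nonneg t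
    have hmpos : (0 : ℝ) < (m : ℝ) := by rw [hm1]; linarith
    have hper : ENNReal.ofReal (1 / (m : ℝ)) ≤ weffRes c (Sum.inl 0) (Sum.inr ()) := by
      refine weffRes_ge c hsymm hnonneg 0 _ fun φ h1 h2 h3 => ?_
      have he : (Finset.univ.erase (0 : Fin 1)) = ∅ := by decide
      rw [he, Finset.sum_empty] at h2
      have hφ : φ = 1 := by have := h2 rfl; linarith
      rw [he, Finset.sum_empty, Finset.sum_empty, haM, hφ]
      simp only [div_zero, add_zero, one_pow]
      exact le_refl _
    have h3sum : ENNReal.ofReal (1 / (m : ℝ))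
        ≤ ∑ x : Fin 1, weffRes c (Sum.inl x) (Sum.inr ()) := by
      rw [Fin.sum_univ_one]
      exact hper
    have hfin1 : (((1 : ℕ) : ℝ) + 2) / 3 - 2 * (t : ℝ) / 3 ≤ 1 / (m : ℝ) := by
      rw [hm1, le_div_iff₀ (by linarith : (0 : ℝ) < 1 + (t : ℝ))]
      rcases Nat.eq_zero_or_pos t with ht | ht
      · subst ht; norm_num
      · have ht1 : (1 : ℝ) ≤ (t : ℝ) := by exact_mod_cast ht
        push_cast
        nlinarith
    have hfin2 : t ≠ 0 → (((1 : ℕ) : ℝ) + 2) / 3 - 2 * (t : ℝ) / 3 < 1 / (m : ℝ) := by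
      intro htne
      have ht1 : (1 : ℝ) ≤ (t : ℝ) := by
        exact_mod_cast Nat.one_le_iff_ne_zero.2 htne
      rw [hm1, lt_div_iff₀ (by linarith : (0 : ℝ) < 1 + (t : ℝ))]
      push_cast
      nlinarith
    exact conclude_res hs c hsymm hnonneg _ _ t hfin1 hfin2 h3sum
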